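/- Let r ≥ 1, let E₁₁ = diag(1,0,…,0) ∈ M_r(ℂ), and let e₁₁ = [[0, E₁₁],[0, 0]] ∈ M_{2r}(ℂ). Then {l·e₁₁·l⁻¹ : l = [[l₁, 0],[0, (l₁ᵀ)⁻¹]], l₁ ∈ GL(r,ℂ)} = {[[0, z·zᵀ],[0, 0]] : z ∈ ℂʳ, z ≠ 0}, where z·zᵀ denotes the r×r matrix with (i,j) entry z_i·z_j. -/

import Mathlib

open Matrix

/-- with `e₁₁ = [[0,E₁₁],[0,0]]`, the orbit of `e₁₁` under conjugation by the
block-diagonal matrices `l = [[l₁,0],[0,(l₁ᵀ)⁻¹]]`, `l₁ ∈ GL(r,ℂ)`, equals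
`{[[0, z·zᵀ],[0,0]] : z ∈ ℂʳ, z ≠ 0}`. -/
lemma vecMulVec_conj {r : ℕ} (l : Matrix (Fin r) (Fin r) ℂ) (u v : Fin r → ℂ) :
    l * vecMulVec u v * lᵀ = vecMulVec (l *ᵥ u) (l *ᵥ v) := by
  ext i j
  simp [mul_apply, vecMulVec_apply, mulVec, dotProduct, Finset.sum_mul, Finset.mul_sum]
  apply Finset.sum_congr rfl; intro k _
  apply Finset.sum_congr rfl; intro m _
  ring

lemma std_eq_vecMulVec {r : ℕ} (hr : 1 ≤ r) :
    Matrix.single (⟨0, hr⟩ : Fin r) (⟨0, hr⟩ : Fin r) (1 : ℂ) =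
      vecMulVec (Pi.single (⟨0, hr⟩ : Fin r) 1) (Pi.single (⟨0, hr⟩ : Fin r) 1) := by
  ext i j
  simp [Matrix.single, vecMulVec_apply, Pi.single_apply]
  aesop

lemma blocks_inv {r : ℕ} {l₁ : Matrix (Fin r) (Fin r) ℂ} (h : IsUnit l₁) :
    (fromBlocks l₁ 0 0 (l₁ᵀ)⁻¹)⁻¹ = fromBlocks l₁⁻¹ 0 0 l₁ᵀ := by
  have hd : IsUnit l₁.det := (isUnit_iff_isUnit_det l₁).mp h
  apply inv_eq_right_inv
  rw [fromBlocks_multiply]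
  simp [mul_nonsing_inv _ hd, nonsing_inv_mul _ (l₁.isUnit_det_transpose hd), fromBlocks_one]

lemma exists_unit_col {r : ℕ} (hr : 1 ≤ r) {z : Fin r → ℂ} (hz : z ≠ 0) :
    ∃ l₁ : Matrix (Fin r) (Fin r) ℂ, IsUnit l₁ ∧ l₁ *ᵥ Pi.single (⟨0, hr⟩ : Fin r) 1 = z := by
  obtain ⟨i, hi⟩ : ∃ i, z i ≠ 0 := Function.ne_iff.mp hz
  refine ⟨(Matrix.updateCol 1 i z).submatrix id (Equiv.swap (⟨0, hr⟩ : Fin r) i), ?_, ?_⟩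
  · rw [isUnit_iff_isUnit_det, det_permute']
    rw [show ((1 : Matrix (Fin r) (Fin r) ℂ).updateCol i z).det = Matrix.cramer (1 : Matrix (Fin r) (Fin r) ℂ) z i from (cramer_apply _ _ _).symm, Matrix.cramer_one]
    simp only [isUnit_iff_ne_zero]
    intro h
    rcases mul_eq_zero.mp h with h | h
    · rcases Int.units_eq_one_or (Equiv.Perm.sign (Equiv.swap (⟨0, hr⟩ : Fin r) i)) with hs | hs <;>
        rw [hs] at h <;> simp at h
    · exact hi h
  · funext j
    simp [mulVec_single, submatrix_apply, Equiv.swap_apply_left, updateCol_apply]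

lemma conj_eq {r : ℕ} (hr : 1 ≤ r) {l₁ : Matrix (Fin r) (Fin r) ℂ} (h : IsUnit l₁) :
    Matrix.fromBlocks l₁ 0 0 (l₁ᵀ)⁻¹ *
        Matrix.fromBlocks 0 (Matrix.single (⟨0, hr⟩ : Fin r) (⟨0, hr⟩ : Fin r) (1 : ℂ)) 0 0 *
        (Matrix.fromBlocks l₁ 0 0 (l₁ᵀ)⁻¹)⁻¹ =
      Matrix.fromBlocks 0
        (vecMulVec (l₁ *ᵥ Pi.single (⟨0, hr⟩ : Fin r) 1) (l₁ *ᵥ Pi.single (⟨0, hr⟩ : Fin r) 1)) 0 0 := by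
  rw [blocks_inv h, fromBlocks_multiply, fromBlocks_multiply, std_eq_vecMulVec hr,
    ← vecMulVec_conj]
  simp [Matrix.mul_assoc]

theorem levi_orbit_e11 (r : ℕ) (hr : 1 ≤ r) :
    {M : Matrix (Fin r ⊕ Fin r) (Fin r ⊕ Fin r) ℂ |
        ∃ l₁ : Matrix (Fin r) (Fin r) ℂ, IsUnit l₁ ∧
          M = Matrix.fromBlocks l₁ 0 0 (l₁ᵀ)⁻¹ *
              Matrix.fromBlocks 0 (Matrix.single (⟨0, hr⟩ : Fin r) (⟨0, hr⟩ : Fin r) (1 : ℂ)) 0 0 *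
              (Matrix.fromBlocks l₁ 0 0 (l₁ᵀ)⁻¹)⁻¹} =
      {M : Matrix (Fin r ⊕ Fin r) (Fin r ⊕ Fin r) ℂ |
        ∃ z : Fin r → ℂ, z ≠ 0 ∧ M = Matrix.fromBlocks 0 (Matrix.vecMulVec z z) 0 0} := by
  ext M
  simp only [Set.mem_setOf_eq]
  constructor
  · rintro ⟨l₁, hl, rfl⟩
    refine ⟨l₁ *ᵥ Pi.single (⟨0, hr⟩ : Fin r) 1, ?_, (conj_eq hr hl)⟩
    intro h0
    have hinj := mulVec_injective_iff_isUnit.mpr hl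
    have : (Pi.single (⟨0, hr⟩ : Fin r) (1 : ℂ) : Fin r → ℂ) = 0 := by
      apply hinj
      rw [h0, mulVec_zero]
    have := congrFun this ⟨0, hr⟩
    simp at this
  · rintro ⟨z, hz, rfl⟩
    obtain ⟨l₁, hl, hcol⟩ := exists_unit_col hr hz
    exact ⟨l₁, hl, by rw [conj_eq hr hl, hcol]⟩
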